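/- A d-dimensional observable M with n ∈ [2,d] effects can be perfectly labeled (by the simple scheme using n−1 probe states) if and only if at least n−1 of its effects have 1 as an eigenvalue. -/

import Mathlib

open Matrix Finset
open scoped ComplexOrder

lemma my_dot_sum {d n : ℕ} (v : Fin d → ℂ) (f : Fin n → (Fin d → ℂ))
    (s : Finset (Fin n)) :
    v ⬝ᵥ (∑ j ∈ s, f j) = ∑ j ∈ s, v ⬝ᵥ f j := by
  classical
  induction s using Finset.induction with
  | empty => simp
  | insert _ _ h ih => simp [Finset.sum_insert h, dotProduct_add, ih]

lemma my_sum_mulVec {d n : ℕ} (M : Fin n → Matrix (Fin d) (Fin d) ℂ)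
    (s : Finset (Fin n)) (φ : Fin d → ℂ) :
    (∑ j ∈ s, M j) *ᵥ φ = ∑ j ∈ s, (M j) *ᵥ φ := by
  classical
  induction s using Finset.induction with
  | empty => simp
  | insert _ _ h ih => simp [Finset.sum_insert h, add_mulVec, ih]

/-- Theorem 5: a `d`-dimensional observable with `n ∈ [2,d]` effects can be perfectly
labeled by the simple scheme in `n − 1` shots (i.e. for at least `n − 1` indices `i`
there is a unit probe vector `φ` annihilated by all other effects but not by `M_i`)
if and only if at least `n − 1` of its effects have `1` as an eigenvalue. -/
theorem perfect_labeling_iff_eigenvalue_one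
    {d n : ℕ} (hn2 : 2 ≤ n) (hnd : n ≤ d)
    (M : Fin n → Matrix (Fin d) (Fin d) ℂ)
    (hM : ∀ j, (M j).PosSemidef) (hsum : ∑ j, M j = 1) :
    (∃ S : Finset (Fin n), n - 1 ≤ S.card ∧ ∀ i ∈ S,
        ∃ φ : Fin d → ℂ, star φ ⬝ᵥ φ = 1 ∧
          (M i).mulVec φ ≠ 0 ∧ ∀ j, j ≠ i → (M j).mulVec φ = 0) ↔
    (∃ S : Finset (Fin n), n - 1 ≤ S.card ∧ ∀ i ∈ S,
        ∃ φ : Fin d → ℂ, φ ≠ 0 ∧ (M i).mulVec φ = φ) := by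
  classical
  constructor
  · rintro ⟨S, hcard, hS⟩
    refine ⟨S, hcard, fun i hi => ?_⟩
    obtain ⟨φ, hunit, hne, hzero⟩ := hS i hi
    refine ⟨φ, ?_, ?_⟩
    · intro h; rw [h] at hunit; simp at hunit
    · -- M i φ = (∑ j) φ since other terms vanish
      have h1 : (∑ j, M j) *ᵥ φ = φ := by rw [hsum, one_mulVec]
      rw [my_sum_mulVec] at h1
      rwa [Finset.sum_eq_single i (fun j _ hj => hzero j hj) (by simp)] at h1
  · rintro ⟨S, hcard, hS⟩
    refine ⟨S, hcard, fun i hi => ?_⟩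
    obtain ⟨φ, hφ, hfix⟩ := hS i hi
    -- all other effects annihilate φ
    have hrest : ∀ j, j ≠ i → (M j) *ᵥ φ = 0 := by
      have hsplit : M i + ∑ j ∈ Finset.univ.erase i, M j = 1 := by
        rw [Finset.add_sum_erase _ _ (Finset.mem_univ i), hsum]
      have hT : ∑ j ∈ Finset.univ.erase i, star φ ⬝ᵥ (M j) *ᵥ φ = 0 := by
        rw [← my_dot_sum, ← my_sum_mulVec]
        have : ∑ j ∈ Finset.univ.erase i, M j = 1 - M i := by
          rw [← hsplit, add_sub_cancel_left]
        rw [this, sub_mulVec, one_mulVec, hfix, sub_self, dotProduct_zero]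
      have hz := (Finset.sum_eq_zero_iff_of_nonneg
        (fun j _ => (hM j).dotProduct_mulVec_nonneg φ)).mp hT
      intro j hj
      exact ((hM j).dotProduct_mulVec_zero_iff φ).mp (hz j (Finset.mem_erase.mpr ⟨hj, Finset.mem_univ j⟩))
    -- normalize φ
    set r : ℝ := ∑ k, Complex.normSq (φ k) with hr_def
    have hdot : star φ ⬝ᵥ φ = (r : ℝ) := by
      simp only [dotProduct, Pi.star_apply, hr_def]
      push_cast
      exact Finset.sum_congr rfl fun k _ => (Complex.normSq_eq_conj_mul_self).symm ▸ rfl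
    have hrpos : 0 < r := by
      obtain ⟨k, hk⟩ := Function.ne_iff.mp hφ
      exact Finset.sum_pos' (fun k _ => Complex.normSq_nonneg _)
        ⟨k, Finset.mem_univ k, Complex.normSq_pos.mpr hk⟩
    set c : ℂ := (((Real.sqrt r)⁻¹ : ℝ) : ℂ) with hc_def
    have hc_ne : c ≠ 0 := by
      simp [hc_def, Real.sqrt_ne_zero', hrpos, ne_of_gt hrpos]
    refine ⟨c • φ, ?_, ?_, ?_⟩
    · have hdp : star (c • φ) ⬝ᵥ (c • φ) = (starRingEnd ℂ) c * (c * (star φ ⬝ᵥ φ)) := by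
        simp only [star_smul, smul_dotProduct, dotProduct_smul, smul_eq_mul, Pi.star_apply,
          RCLike.star_def]
        ring
      have key : ((Real.sqrt r)⁻¹) * ((Real.sqrt r)⁻¹ * r) = 1 := by
        rw [← mul_assoc, ← mul_inv, Real.mul_self_sqrt hrpos.le]
        field_simp
      rw [hdp, hdot, hc_def, Complex.conj_ofReal]
      calc (((Real.sqrt r)⁻¹ : ℝ) : ℂ) * ((((Real.sqrt r)⁻¹ : ℝ) : ℂ) * (r : ℂ))
          = ((((Real.sqrt r)⁻¹) * ((Real.sqrt r)⁻¹ * r) : ℝ) : ℂ) := by push_cast; ring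
        _ = 1 := by rw [key]; norm_num
    · rw [mulVec_smul, hfix]
      exact smul_ne_zero hc_ne hφ
    · intro j hj
      rw [mulVec_smul, hrest j hj, smul_zero]
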